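/- For t ∈ ℂ define z₃(t) = −(9t + 32)(t + 8)/(40t(3 + t)) and w₃(t) = −(t + 8)²(3t + 8)(3t + 4)/(40t²(t + 3)²). Then z₃(−16/7) = 1, w₃(−16/7) = 1, and the complex derivatives of z₃ and of w₃ both vanish at t = −16/7. (Thus the rational quartic component Γ_{d,−9/32,1} of the critical level curve {R_d = −9/32} has a singular point — in fact a cusp — at (1,1), corresponding to the parameter value t = −16/7.) -/

import Mathlib

/-- The rational quartic component `Γ_{d,−9/32,1}` of the critical level curve
`{R_d = −9/32}`, parametrized by `t ↦ (z₃(t), w₃(t))`, has a singular point (a cusp)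
at `(1,1)`, corresponding to the parameter value `t = −16/7`. -/
theorem stmt_19 (z₃ w₃ : ℂ → ℂ)
    (hz₃ : ∀ t : ℂ, z₃ t = -((9*t + 32) * (t + 8)) / (40 * t * (3 + t)))
    (hw₃ : ∀ t : ℂ, w₃ t = -((t + 8)^2 * (3*t + 8) * (3*t + 4)) / (40 * t^2 * (t + 3)^2)) :
    z₃ (-16/7) = 1 ∧ w₃ (-16/7) = 1 ∧
    deriv z₃ (-16/7) = 0 ∧ deriv w₃ (-16/7) = 0 := by
  have hzf : z₃ = fun t : ℂ => -((9*t + 32) * (t + 8)) / (40 * t * (3 + t)) := funext hz₃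
  have hwf : w₃ = fun t : ℂ => -((t + 8)^2 * (3*t + 8) * (3*t + 4)) / (40 * t^2 * (t + 3)^2) :=
    funext hw₃
  subst hzf hwf
  set x : ℂ := -16/7 with hx
  have hid : HasDerivAt (fun t : ℂ => t) 1 x := hasDerivAt_id x
  -- numerator and denominator derivatives for z₃
  have hn1 : HasDerivAt (fun t : ℂ => -((9*t + 32) * (t + 8)))
      (-( (9*1) * (x + 8) + (9*x + 32) * 1)) x :=
    (((hid.const_mul 9).add_const 32).mul (hid.add_const 8)).neg
  have hd1 : HasDerivAt (fun t : ℂ => 40 * t * (3 + t))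
      ((40*1) * (3 + x) + (40*x) * 1) x :=
    (hid.const_mul 40).mul (hid.const_add 3)
  have hd1ne : (40 * x * (3 + x)) ≠ 0 := by
    rw [hx]; norm_num
  have hz : HasDerivAt (fun t : ℂ => -((9*t + 32) * (t + 8)) / (40 * t * (3 + t)))
      ((-( (9*1) * (x + 8) + (9*x + 32) * 1) * (40 * x * (3 + x)) -
        -((9*x + 32) * (x + 8)) * ((40*1) * (3 + x) + (40*x) * 1)) / (40 * x * (3 + x))^2) x :=
    hn1.div hd1 hd1ne
  -- numerator and denominator derivatives for w₃
  have hp2 : HasDerivAt (fun t : ℂ => (t + 8)^2) (2 * (x + 8)) x := by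
    simpa using (hid.add_const 8).fun_pow 2
  have hn2 : HasDerivAt (fun t : ℂ => -((t + 8)^2 * (3*t + 8) * (3*t + 4)))
      (-((2 * (x + 8) * (3*x + 8) + (x + 8)^2 * (3*1)) * (3*x + 4)
         + (x + 8)^2 * (3*x + 8) * (3*1))) x :=
    ((hp2.mul ((hid.const_mul 3).add_const 8)).mul ((hid.const_mul 3).add_const 4)).neg
  have hx2 : HasDerivAt (fun t : ℂ => 40 * t^2) (40 * (2 * x)) x := by
    simpa using ((hid.pow 2).const_mul 40)
  have hd2 : HasDerivAt (fun t : ℂ => 40 * t^2 * (t + 3)^2)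
      (40 * (2 * x) * (x + 3)^2 + 40 * x^2 * (2 * (x + 3))) x := by
    have hq : HasDerivAt (fun t : ℂ => (t + 3)^2) (2 * (x + 3)) x := by
      simpa using (hid.add_const 3).fun_pow 2
    exact hx2.mul hq
  have hd2ne : (40 * x^2 * (x + 3)^2) ≠ 0 := by
    rw [hx]; norm_num
  have hw : HasDerivAt (fun t : ℂ => -((t + 8)^2 * (3*t + 8) * (3*t + 4)) / (40 * t^2 * (t + 3)^2))
      ((-((2 * (x + 8) * (3*x + 8) + (x + 8)^2 * (3*1)) * (3*x + 4)
         + (x + 8)^2 * (3*x + 8) * (3*1)) * (40 * x^2 * (x + 3)^2) -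
        -((x + 8)^2 * (3*x + 8) * (3*x + 4)) *
          (40 * (2 * x) * (x + 3)^2 + 40 * x^2 * (2 * (x + 3)))) / (40 * x^2 * (x + 3)^2)^2) x :=
    hn2.div hd2 hd2ne
  refine ⟨by rw [hx]; norm_num, by rw [hx]; norm_num, ?_, ?_⟩
  · rw [hz.deriv, hx]; norm_num
  · rw [hw.deriv, hx]; norm_num
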